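/- Let p be an odd prime, f₁, f₂ : F_p → ℂ, and define F(x) = (1/p) · Σ_{y ∈ F_p} f₁(x + y) · f₂(x + y²). Then ‖F − E[f₁]·E[f₂]‖₂ = (1/√p) · ( Σ_{s ∈ F_p} | Σ_{n ∈ F_p, n ≠ 0} f̂₁(s − n) · f̂₂(n) · χ(n) · K(s − n, n) |² )^(1/2), where K(x, y) = e_p(−x² · (4y)^{−1}) for y ≠ 0 and K(x, 0) = 0, and χ is the Legendre symbol modulo p. -/

import Mathlib

open Finset
open Finset

/-- `e_p(x) = exp(2πi x / p)` for `x : ZMod p`. -/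
noncomputable def ep (p : ℕ) [NeZero p] (x : ZMod p) : ℂ :=
  Complex.exp (2 * (Real.pi : ℂ) * Complex.I * (x.val : ℂ) / (p : ℂ))

/-- Average `E[f] = (1/p) Σ_x f(x)`. -/
noncomputable def avg (p : ℕ) [NeZero p] (f : ZMod p → ℂ) : ℂ :=
  (1 / (p : ℂ)) * ∑ x : ZMod p, f x

/-- Normalized L²-norm. -/
noncomputable def nrm2 (p : ℕ) [NeZero p] (f : ZMod p → ℂ) : ℝ :=
  Real.sqrt ((1 / (p : ℝ)) * ∑ x : ZMod p, ‖f x‖ ^ 2)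

/-- Fourier transform `f̂(z) = (1/p) Σ_x e_p(-xz) f(x)`. -/
noncomputable def ft (p : ℕ) [NeZero p] (f : ZMod p → ℂ) (z : ZMod p) : ℂ :=
  (1 / (p : ℂ)) * ∑ x : ZMod p, ep p (-(x * z)) * f x

/-- The quadratic kernel `K(x,y) = e_p(-x²(4y)⁻¹)` for `y ≠ 0`, `0` otherwise. -/
noncomputable def Kq (p : ℕ) [NeZero p] (x y : ZMod p) : ℂ :=
  if y = 0 then 0 else ep p (-(x ^ 2 * (4 * y)⁻¹))

section base

variable {p : ℕ} [NeZero p]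

lemma ep_eq_std (x : ZMod p) : ep p x = ZMod.stdAddChar x := by
  rw [ZMod.stdAddChar_apply, ZMod.toCircle_apply, ep]

lemma ep_add (x y : ZMod p) : ep p (x + y) = ep p x * ep p y := by
  simp [ep_eq_std, AddChar.map_add_eq_mul]

lemma ep_zero : ep p (0 : ZMod p) = 1 := by
  simp [ep_eq_std]

lemma ep_conj (x : ZMod p) : (starRingEnd ℂ) (ep p x) = ep p (-x) := by
  have h1 : ep p x * ep p (-x) = 1 := by rw [← ep_add]; simp [ep_zero]
  have h2 : (starRingEnd ℂ) (ep p x) = (ep p x)⁻¹ := by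
    rw [ep, ← Complex.exp_conj, ← Complex.exp_neg]
    congr 1
    simp only [map_div₀, map_mul, Complex.conj_I, map_natCast, map_ofNat, Complex.conj_ofReal]
    ring
  rw [h2, inv_eq_of_mul_eq_one_right h1]

lemma sum_ep_mul (u : ZMod p) :
    ∑ x : ZMod p, ep p (x * u) = if u = 0 then (p : ℂ) else 0 := by
  simp_rw [ep_eq_std]
  rw [AddChar.sum_mulShift u (ZMod.isPrimitive_stdAddChar p)]
  simp [ZMod.card p]

lemma pc_ne_zero : (p : ℂ) ≠ 0 := by
  exact_mod_cast (Nat.cast_ne_zero (R := ℂ)).mpr (NeZero.ne p)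

lemma ft_inv (f : ZMod p → ℂ) (x : ZMod p) :
    ∑ z : ZMod p, ft p f z * ep p (x * z) = f x := by
  have key : ∀ z : ZMod p, ft p f z * ep p (x * z)
      = 1 / (p : ℂ) * ∑ w : ZMod p, f w * ep p (z * (x - w)) := by
    intro z
    rw [ft, mul_assoc, Finset.sum_mul]
    congr 1
    refine Finset.sum_congr rfl fun w _ => ?_
    rw [mul_comm (ep p (-(w * z))) (f w), mul_assoc, ← ep_add]
    congr 2
    ring
  simp_rw [key]
  rw [← Finset.mul_sum, Finset.sum_comm]
  have inner : ∀ w : ZMod p, ∑ z : ZMod p, f w * ep p (z * (x - w))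
      = f w * (if x - w = 0 then (p : ℂ) else 0) := by
    intro w; rw [← Finset.mul_sum, sum_ep_mul]
  simp_rw [inner]
  simp only [sub_eq_zero, mul_ite, mul_zero]
  rw [Finset.sum_ite_eq Finset.univ x (fun w => f w * (p : ℂ))]
  simp [pc_ne_zero]
  field_simp
  exact mul_div_cancel_left₀ _ pc_ne_zero

lemma ft_zero (f : ZMod p → ℂ) : ft p f 0 = avg p f := by
  rw [ft, avg]
  congr 1
  refine Finset.sum_congr rfl fun x _ => ?_
  rw [mul_zero, neg_zero, ep_zero, one_mul]

lemma parseval_c (c : ZMod p → ℂ) :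
    ∑ x : ZMod p, (∑ s : ZMod p, c s * ep p (s * x)) *
        (starRingEnd ℂ) (∑ s : ZMod p, c s * ep p (s * x))
      = (p : ℂ) * ∑ s : ZMod p, c s * (starRingEnd ℂ) (c s) := by
  have expand : ∀ x : ZMod p, (∑ s : ZMod p, c s * ep p (s * x)) *
      (starRingEnd ℂ) (∑ s : ZMod p, c s * ep p (s * x))
      = ∑ s : ZMod p, ∑ t : ZMod p, (c s * (starRingEnd ℂ) (c t)) * ep p (x * (s - t)) := by
    intro x
    rw [map_sum, Finset.sum_mul_sum]
    refine Finset.sum_congr rfl fun s _ => Finset.sum_congr rfl fun t _ => ?_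
    rw [map_mul, ep_conj]
    have : ep p (s * x) * ep p (-(t * x)) = ep p (x * (s - t)) := by
      rw [← ep_add]; congr 1; ring
    rw [show c s * ep p (s * x) * ((starRingEnd ℂ) (c t) * ep p (-(t * x)))
        = (c s * (starRingEnd ℂ) (c t)) * (ep p (s * x) * ep p (-(t * x))) by ring, this]
  simp_rw [expand]
  rw [Finset.sum_comm]
  have inner : ∀ s : ZMod p, ∑ x : ZMod p, ∑ t : ZMod p,
      (c s * (starRingEnd ℂ) (c t)) * ep p (x * (s - t))
      = (p : ℂ) * (c s * (starRingEnd ℂ) (c s)) := by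
    intro s
    rw [Finset.sum_comm]
    have : ∀ t : ZMod p, ∑ x : ZMod p, (c s * (starRingEnd ℂ) (c t)) * ep p (x * (s - t))
        = (c s * (starRingEnd ℂ) (c t)) * (if s - t = 0 then (p : ℂ) else 0) := by
      intro t; rw [← Finset.mul_sum, sum_ep_mul]
    simp_rw [this]
    simp only [sub_eq_zero, mul_ite, mul_zero]
    rw [Finset.sum_ite_eq Finset.univ s (fun t => c s * (starRingEnd ℂ) (c t) * (p : ℂ))]
    simp [mul_comm]
  simp_rw [inner]
  rw [← Finset.mul_sum]

lemma parseval (c : ZMod p → ℂ) :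
    (1 / (p : ℝ)) * ∑ x : ZMod p, ‖∑ s : ZMod p, c s * ep p (s * x)‖ ^ 2
      = ∑ s : ZMod p, ‖c s‖ ^ 2 := by
  have hp : (p : ℝ) ≠ 0 := by exact_mod_cast NeZero.ne p
  have hc := parseval_c c
  simp_rw [Complex.mul_conj] at hc
  have : ((∑ x : ZMod p, ‖∑ s : ZMod p, c s * ep p (s * x)‖ ^ 2 : ℝ) : ℂ)
      = ((p : ℝ) : ℂ) * ((∑ s : ZMod p, ‖c s‖ ^ 2 : ℝ) : ℂ) := by
    push_cast [← Complex.normSq_eq_norm_sq]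
    exact_mod_cast hc
  have hr := Complex.ofReal_inj.mp (by exact_mod_cast this)
  rw [hr]
  field_simp

end base

section gauss

variable {p : ℕ} [Fact p.Prime] (hp2 : p ≠ 2)

/-- quadratic character with values in ℂ -/
noncomputable def qc (p : ℕ) [Fact p.Prime] : MulChar (ZMod p) ℂ :=
  (quadraticChar (ZMod p)).ringHomComp (Int.castRingHom ℂ)

include hp2

lemma zmodTwoNeZero : (2 : ZMod p) ≠ 0 := by
  intro h
  have h2 : ((2 : ℕ) : ZMod p) = 0 := by exact_mod_cast h
  rw [ZMod.natCast_eq_zero_iff] at h2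
  exact hp2 ((Nat.prime_dvd_prime_iff_eq (Fact.out) Nat.prime_two).mp h2)

omit hp2 in
lemma sum_ep_eq_zero : ∑ x : ZMod p, ep p x = 0 := by
  have := sum_ep_mul (p := p) 1
  simp only [mul_one] at this
  rw [this, if_neg one_ne_zero]

/-- counting squares -/
lemma sum_sq (f : ZMod p → ℂ) :
    ∑ y : ZMod p, f (y ^ 2) = ∑ u : ZMod p, (qc p u + 1) * f u := by
  classical
  rw [← Finset.sum_fiberwise_of_maps_to (g := fun y : ZMod p => y ^ 2)
    (fun x _ => Finset.mem_univ ((fun y : ZMod p => y ^ 2) x)) (fun y => f (y ^ 2))]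
  refine Finset.sum_congr rfl fun u _ => ?_
  have hcard : (({x : ZMod p | x ^ 2 = u}.toFinset.card : ℤ)) = quadraticChar (ZMod p) u + 1 :=
    quadraticChar_card_sqrts ((ZMod.ringChar_zmod_n p).substr hp2) u
  have hfe : ({x : ZMod p | x ^ 2 = u}.toFinset) = univ.filter (fun y => y ^ 2 = u) := by
    ext x; simp
  calc ∑ y ∈ univ.filter (fun y : ZMod p => y ^ 2 = u), f (y ^ 2)
      = ∑ y ∈ univ.filter (fun y : ZMod p => y ^ 2 = u), f u := by
        refine Finset.sum_congr rfl fun y hy => ?_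
        rw [(Finset.mem_filter.mp hy).2]
    _ = ((univ.filter (fun y : ZMod p => y ^ 2 = u)).card : ℂ) * f u := by
        rw [Finset.sum_const, nsmul_eq_mul]
    _ = (qc p u + 1) * f u := by
        congr 1
        rw [← hfe]
        have : (({x : ZMod p | x ^ 2 = u}.toFinset.card : ℤ) : ℂ) =
            ((quadraticChar (ZMod p) u : ℤ) : ℂ) + 1 := by exact_mod_cast hcard
        simpa [qc, MulChar.ringHomComp] using this

lemma gauss_expand : ∑ y : ZMod p, ep p (y ^ 2) = ∑ u : ZMod p, qc p u * ep p u := by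
  rw [sum_sq hp2 (fun u => ep p u)]
  simp only [add_mul, one_mul, Finset.sum_add_distrib, sum_ep_eq_zero, add_zero]

omit hp2 in
lemma qc_sq {b : ZMod p} (hb : b ≠ 0) : qc p b * qc p b = 1 := by
  have h1 : qc p b * qc p b = qc p (b * b) := (map_mul _ _ _).symm
  rw [h1, ← sq]
  have h2 : quadraticChar (ZMod p) (b ^ 2) = 1 := by
    rw [map_pow]
    exact sq (quadraticChar (ZMod p) b) ▸ quadraticChar_sq_one hb
  rw [qc, MulChar.ringHomComp_apply, h2]
  norm_num

lemma sum_ep_quad {b : ZMod p} (hb : b ≠ 0) :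
    ∑ y : ZMod p, ep p (b * y ^ 2) = qc p b * ∑ y : ZMod p, ep p (y ^ 2) := by
  rw [gauss_expand hp2, sum_sq hp2 (fun u => ep p (b * u))]
  have h1 : ∑ u : ZMod p, ep p (b * u) = 0 := by
    calc ∑ u : ZMod p, ep p (b * u) = ∑ u : ZMod p, ep p (u * b) := by
          simp_rw [mul_comm]
      _ = 0 := by rw [sum_ep_mul b, if_neg hb]
  simp only [add_mul, one_mul, Finset.sum_add_distrib, h1, add_zero]
  rw [Finset.mul_sum]
  apply Fintype.sum_bijective (fun u : ZMod p => b * u) (mulLeft_bijective₀ b hb)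
  intro u
  rw [map_mul, ← mul_assoc, ← mul_assoc, mul_comm (qc p b) (qc p b), qc_sq hb, one_mul]

lemma gauss_norm : (∑ y : ZMod p, ep p (y ^ 2)) * (starRingEnd ℂ) (∑ y : ZMod p, ep p (y ^ 2))
    = (p : ℂ) := by
  rw [map_sum]
  simp_rw [ep_conj]
  rw [Finset.sum_mul_sum]
  have step : ∀ y z : ZMod p, ep p (y ^ 2) * ep p (-(z ^ 2)) = ep p (y ^ 2 - z ^ 2) := by
    intro y z; rw [← ep_add]; congr 1; ring
  simp_rw [step]
  rw [Finset.sum_comm]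
  have step2 : ∀ z : ZMod p, ∑ y : ZMod p, ep p (y ^ 2 - z ^ 2)
      = ∑ t : ZMod p, ep p (t ^ 2) * ep p (z * (2 * t)) := by
    intro z
    rw [← Equiv.sum_comp (Equiv.addLeft z) (fun y => ep p (y ^ 2 - z ^ 2))]
    refine Finset.sum_congr rfl fun t _ => ?_
    rw [← ep_add]
    congr 1
    simp [Equiv.addLeft]
    ring
  simp_rw [step2]
  rw [Finset.sum_comm]
  have step3 : ∀ t : ZMod p, ∑ z : ZMod p, ep p (t ^ 2) * ep p (z * (2 * t))
      = ep p (t ^ 2) * (if 2 * t = 0 then (p : ℂ) else 0) := by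
    intro t
    rw [← Finset.mul_sum, sum_ep_mul]
  simp_rw [step3]
  rw [Finset.sum_eq_single 0]
  · simp [ep_zero]
  · intro t _ ht
    rw [if_neg (by
      intro h
      exact ht (by
        rcases mul_eq_zero.mp h with h2 | h2
        · exact absurd h2 (zmodTwoNeZero hp2)
        · exact h2)), mul_zero]
  · intro h; exact absurd (Finset.mem_univ 0) h

lemma complete_sq {b : ZMod p} (hb : b ≠ 0) (a : ZMod p) :
    ∑ y : ZMod p, ep p (b * y ^ 2 + a * y)
      = ep p (-(a ^ 2 * (4 * b)⁻¹)) * ∑ y : ZMod p, ep p (b * y ^ 2) := by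
  have h2 : (2 : ZMod p) ≠ 0 := zmodTwoNeZero hp2
  have h4 : (4 : ZMod p) ≠ 0 := by
    have h44 : (4 : ZMod p) = 2 * 2 := by norm_num
    rw [h44]; exact mul_ne_zero h2 h2
  set c := a * (2 * b)⁻¹ with hc
  rw [Finset.mul_sum]
  rw [← Equiv.sum_comp (Equiv.subRight c) (fun y => ep p (b * y ^ 2 + a * y))]
  refine Finset.sum_congr rfl fun y _ => ?_
  rw [← ep_add]
  congr 1
  simp only [Equiv.subRight, Equiv.coe_fn_mk, hc]
  field_simp
  ring

/-- the full quadratic exponential sum -/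
lemma quad_sum {b : ZMod p} (hb : b ≠ 0) (a : ZMod p) :
    ∑ y : ZMod p, ep p (b * y ^ 2 + a * y)
      = Kq p a b * qc p b * ∑ y : ZMod p, ep p (y ^ 2) := by
  rw [complete_sq hp2 hb a, sum_ep_quad hp2 hb, Kq, if_neg hb]
  ring

omit hp2 in
lemma qc_eq_legendre (n : ZMod p) : ((legendreSym p (n.val : ℤ) : ℤ) : ℂ) = qc p n := by
  have h : ((n.val : ℤ) : ZMod p) = n := by
    push_cast [ZMod.natCast_val, ZMod.cast_id]
    rfl
  rw [legendreSym, h, qc, MulChar.ringHomComp_apply]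
  norm_num

end gauss

theorem stmt5 (p : ℕ) [Fact p.Prime] (hodd : p ≠ 2) (f₁ f₂ F : ZMod p → ℂ)
    (hF : ∀ x, F x = (1 / (p : ℂ)) * ∑ y : ZMod p, f₁ (x + y) * f₂ (x + y ^ 2)) :
    nrm2 p (fun x => F x - avg p f₁ * avg p f₂) =
      (1 / Real.sqrt p) *
        (∑ s : ZMod p, ‖∑ n ∈ Finset.univ.filter (fun n : ZMod p => n ≠ 0),
          ft p f₁ (s - n) * ft p f₂ n * (legendreSym p (n.val : ℤ) : ℂ) *
            Kq p (s - n) n‖ ^ 2) ^ ((1 : ℝ) / 2) := by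
  have hp2 := hodd
  set g : ℂ := ∑ y : ZMod p, ep p (y ^ 2) with hgdef
  set c : ZMod p → ℂ := fun s => ∑ n ∈ Finset.univ.filter (fun n : ZMod p => n ≠ 0),
      ft p f₁ (s - n) * ft p f₂ n * (legendreSym p (n.val : ℤ) : ℂ) * Kq p (s - n) n
    with hcdef
  have main : ∀ x, F x - avg p f₁ * avg p f₂ = ∑ s : ZMod p, (g / p * c s) * ep p (s * x) := by
    intro x
    have hsum : ∑ y : ZMod p, f₁ (x + y) * f₂ (x + y ^ 2)
        = ∑ a : ZMod p, ∑ b : ZMod p, (ft p f₁ a * ft p f₂ b * ep p ((a + b) * x))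
            * ∑ y : ZMod p, ep p (b * y ^ 2 + a * y) := by
      have e1 : ∑ y : ZMod p, f₁ (x + y) * f₂ (x + y ^ 2)
          = ∑ y : ZMod p, ∑ a : ZMod p, ∑ b : ZMod p,
              (ft p f₁ a * ft p f₂ b * ep p ((a + b) * x)) * ep p (b * y ^ 2 + a * y) := by
        refine Finset.sum_congr rfl fun y _ => ?_
        rw [← ft_inv f₁ (x + y), ← ft_inv f₂ (x + y ^ 2), Finset.sum_mul_sum]
        refine Finset.sum_congr rfl fun a _ => Finset.sum_congr rfl fun b _ => ?_
        have h1 : ep p ((x + y) * a) * ep p ((x + y ^ 2) * b)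
            = ep p ((a + b) * x) * ep p (b * y ^ 2 + a * y) := by
          rw [← ep_add, ← ep_add]; congr 1; ring
        calc ft p f₁ a * ep p ((x + y) * a) * (ft p f₂ b * ep p ((x + y ^ 2) * b))
            = (ft p f₁ a * ft p f₂ b) * (ep p ((x + y) * a) * ep p ((x + y ^ 2) * b)) := by
              ring
          _ = _ := by rw [h1]; ring
      rw [e1, Finset.sum_comm]
      refine Finset.sum_congr rfl fun a _ => ?_
      rw [Finset.sum_comm]
      refine Finset.sum_congr rfl fun b _ => ?_
      rw [Finset.mul_sum]
    have hsplit : ∀ a : ZMod p,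
        (∑ b : ZMod p, (ft p f₁ a * ft p f₂ b * ep p ((a + b) * x))
            * ∑ y : ZMod p, ep p (b * y ^ 2 + a * y))
        = (ft p f₁ a * ft p f₂ 0 * ep p (a * x)) * (if a = 0 then (p : ℂ) else 0)
          + ∑ b ∈ Finset.univ.erase (0 : ZMod p),
              (ft p f₁ a * ft p f₂ b * ep p ((a + b) * x)) * (Kq p a b * qc p b * g) := by
      intro a
      rw [← Finset.add_sum_erase _ _ (Finset.mem_univ (0 : ZMod p))]
      congr 1
      · have h0 : ∑ y : ZMod p, ep p (0 * y ^ 2 + a * y) = if a = 0 then (p : ℂ) else 0 := by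
          rw [← sum_ep_mul a]
          refine Finset.sum_congr rfl fun y _ => ?_
          congr 1; ring
        rw [h0, add_zero]
      · refine Finset.sum_congr rfl fun b hb => ?_
        rw [quad_sum hp2 (Finset.ne_of_mem_erase hb) a, ← hgdef]
    have hfirst : ∑ a : ZMod p,
        (ft p f₁ a * ft p f₂ 0 * ep p (a * x)) * (if a = 0 then (p : ℂ) else 0)
        = avg p f₁ * avg p f₂ * p := by
      rw [Finset.sum_eq_single 0]
      · rw [if_pos rfl, ft_zero, ft_zero, zero_mul, ep_zero]; ring
      · intro b _ hb; rw [if_neg hb, mul_zero]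
      · intro h; exact absurd (Finset.mem_univ 0) h
    have hFx : F x = avg p f₁ * avg p f₂
        + 1 / (p : ℂ) * ∑ a : ZMod p, ∑ b ∈ Finset.univ.erase (0 : ZMod p),
            (ft p f₁ a * ft p f₂ b * ep p ((a + b) * x)) * (Kq p a b * qc p b * g) := by
      rw [hF x, hsum]
      simp_rw [hsplit]
      rw [Finset.sum_add_distrib, hfirst, mul_add]
      congr 1
      rw [← mul_assoc]
      field_simp
      rw [mul_assoc, mul_div_cancel_left₀ _ pc_ne_zero]
    rw [hFx, add_sub_cancel_left]
    calc 1 / (p : ℂ) * ∑ a : ZMod p, ∑ b ∈ Finset.univ.erase (0 : ZMod p),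
            (ft p f₁ a * ft p f₂ b * ep p ((a + b) * x)) * (Kq p a b * qc p b * g)
        = ∑ b ∈ Finset.univ.erase (0 : ZMod p), ∑ a : ZMod p,
            1 / (p : ℂ) * ((ft p f₁ a * ft p f₂ b * ep p ((a + b) * x))
              * (Kq p a b * qc p b * g)) := by
          rw [Finset.mul_sum]
          simp_rw [Finset.mul_sum]
          rw [Finset.sum_comm]
      _ = ∑ n ∈ Finset.univ.filter (fun n : ZMod p => n ≠ 0), ∑ s : ZMod p,
            (g / p * (ft p f₁ (s - n) * ft p f₂ n * (legendreSym p (n.val : ℤ) : ℂ)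
              * Kq p (s - n) n)) * ep p (s * x) := by
          rw [Finset.filter_ne']
          refine Finset.sum_congr rfl fun n hn => ?_
          rw [← Equiv.sum_comp (Equiv.addRight n)
            (fun s => (g / p * (ft p f₁ (s - n) * ft p f₂ n
              * (legendreSym p (n.val : ℤ) : ℂ) * Kq p (s - n) n)) * ep p (s * x))]
          refine Finset.sum_congr rfl fun a _ => ?_
          simp only [Equiv.coe_addRight]
          rw [add_sub_cancel_right, qc_eq_legendre n]
          ring
      _ = ∑ s : ZMod p, (g / p * c s) * ep p (s * x) := by
          rw [Finset.sum_comm]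
          refine Finset.sum_congr rfl fun s _ => ?_
          rw [← Finset.sum_mul, ← Finset.mul_sum]
  have hfun : (fun x => F x - avg p f₁ * avg p f₂)
      = fun x => ∑ s : ZMod p, (g / p * c s) * ep p (s * x) := funext main
  rw [hfun, nrm2, parseval (fun s => g / p * c s)]
  have hpr : (p : ℝ) ≠ 0 := by exact_mod_cast NeZero.ne p
  have hg2 : ‖g‖ ^ 2 = (p : ℝ) := by
    have h := gauss_norm (p := p) hp2
    rw [Complex.mul_conj] at h
    have h2 : Complex.normSq g = (p : ℝ) := by exact_mod_cast h
    rw [Complex.sq_norm]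
    exact h2
  have habs : ∀ s : ZMod p, ‖g / p * c s‖ ^ 2
      = (1 / (p : ℝ)) * ‖c s‖ ^ 2 := by
    intro s
    rw [norm_mul, norm_div, mul_pow, div_pow, hg2, Complex.norm_natCast]
    field_simp
  simp_rw [habs]
  rw [← Finset.mul_sum, Real.sqrt_mul (by positivity)]
  congr 1
  · rw [one_div, Real.sqrt_inv, one_div]
  · rw [Real.sqrt_eq_rpow]
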